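/- Let ν be a Lévy measure with Laplace exponent Φ(q) = βq + ∫₀^∞(1−e^{−qh})ν(dh), β ≥ 0. Then ∫₁^∞ ln(h) ν(dh) = ∞ if and only if ∫₀^θ Φ(x)/x dx = ∞ for some θ > 0 (equivalently, for every θ > 0). -/

import Mathlib

open Real MeasureTheory Filter Set Topology


lemma hlp_one_sub_exp_le_min {t : ℝ} (ht : 0 ≤ t) : 1 - Real.exp (-t) ≤ min 1 t := by
  refine le_min (by linarith [Real.exp_pos (-t)]) ?_
  have := Real.add_one_le_exp (-t); linarith

lemma hlp_lint_inv (a θ : ℝ) (ha : 0 < a) (haθ : a ≤ θ) :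
    ∫⁻ x in Ioc a θ, (ENNReal.ofReal x)⁻¹ = ENNReal.ofReal (Real.log θ - Real.log a) := by
  have h1 : ∫⁻ x in Ioc a θ, (ENNReal.ofReal x)⁻¹
      = ∫⁻ x in Ioc a θ, ENNReal.ofReal x⁻¹ := by
    refine setLIntegral_congr_fun measurableSet_Ioc (fun x hx => ?_)
    exact (ENNReal.ofReal_inv_of_pos (ha.trans_le hx.1.le)).symm
  have hint : IntegrableOn (fun x : ℝ => x⁻¹) (Ioc a θ) := by
    refine (ContinuousOn.integrableOn_compact isCompact_Icc ?_).mono_set Ioc_subset_Icc_self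
    exact continuousOn_inv₀.mono fun x hx => ne_of_gt (ha.trans_le hx.1)
  have h2 : ENNReal.ofReal (∫ x in Ioc a θ, x⁻¹)
      = ∫⁻ x in Ioc a θ, ENNReal.ofReal x⁻¹ := by
    refine ofReal_integral_eq_lintegral_ofReal hint ?_
    filter_upwards [ae_restrict_mem measurableSet_Ioc] with x hx
    exact inv_nonneg.2 (ha.trans_le hx.1.le).le
  have h3 : (∫ x in Ioc a θ, x⁻¹) = Real.log θ - Real.log a := by
    rw [← intervalIntegral.integral_of_le haθ,
      integral_inv_of_pos ha (ha.trans_le haθ),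
      Real.log_div (ne_of_gt (ha.trans_le haθ)) (ne_of_gt ha)]
  rw [h1, ← h2, h3]

lemma hlp_k_le {x u : ℝ} (hx : 0 < x) (hu : 0 < u) :
    ENNReal.ofReal (1 - Real.exp (-x * u)) * (ENNReal.ofReal x)⁻¹ ≤ ENNReal.ofReal u := by
  have h1 : 1 - Real.exp (-x * u) ≤ x * u := by
    have := hlp_one_sub_exp_le_min (t := x*u) (by positivity)
    rw [neg_mul]
    exact this.trans (min_le_right _ _)
  calc ENNReal.ofReal (1 - Real.exp (-x * u)) * (ENNReal.ofReal x)⁻¹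
      ≤ ENNReal.ofReal (x * u) * (ENNReal.ofReal x)⁻¹ :=
        mul_le_mul_left (ENNReal.ofReal_le_ofReal h1) _
    _ = ENNReal.ofReal x * (ENNReal.ofReal x)⁻¹ * ENNReal.ofReal u := by
        rw [ENNReal.ofReal_mul hx.le, mul_right_comm]
    _ = ENNReal.ofReal u := by
        rw [ENNReal.mul_inv_cancel (ENNReal.ofReal_pos.2 hx).ne' ENNReal.ofReal_ne_top, one_mul]

lemma hlp_k_le_inv {x u : ℝ} :
    ENNReal.ofReal (1 - Real.exp (-x * u)) * (ENNReal.ofReal x)⁻¹ ≤ (ENNReal.ofReal x)⁻¹ := by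
  calc ENNReal.ofReal (1 - Real.exp (-x * u)) * (ENNReal.ofReal x)⁻¹
      ≤ 1 * (ENNReal.ofReal x)⁻¹ := by
        refine mul_le_mul_left (ENNReal.ofReal_le_one.2 ?_) _
        linarith [Real.exp_pos (-x*u)]
    _ = (ENNReal.ofReal x)⁻¹ := one_mul _

-- bound on a piece: ∫ over Ioc a b of k ≤ ofReal u * vol
lemma hlp_piece_const {u a b : ℝ} (hu : 0 < u) (ha : 0 ≤ a) :
    (∫⁻ x in Ioc a b, ENNReal.ofReal (1 - Real.exp (-x * u)) * (ENNReal.ofReal x)⁻¹)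
      ≤ ENNReal.ofReal u * ENNReal.ofReal (b - a) := by
  calc (∫⁻ x in Ioc a b, ENNReal.ofReal (1 - Real.exp (-x * u)) * (ENNReal.ofReal x)⁻¹)
      ≤ ∫⁻ _ in Ioc a b, ENNReal.ofReal u :=
        setLIntegral_mono' measurableSet_Ioc fun x hx => hlp_k_le (ha.trans_lt hx.1) hu
    _ = ENNReal.ofReal u * volume (Ioc a b) := setLIntegral_const _ _
    _ ≤ ENNReal.ofReal u * ENNReal.ofReal (b - a) := by rw [Real.volume_Ioc]

lemma hlp_exp1_lt : Real.exp (-1) < 1 := by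
  have h := Real.exp_lt_exp.2 (by norm_num : (-1:ℝ) < 0)
  rwa [Real.exp_zero] at h

lemma hlp_g_small {θ u : ℝ} (hθ : 0 < θ) (hu : 0 < u) :
    (∫⁻ x in Ioc (0:ℝ) θ, ENNReal.ofReal (1 - Real.exp (-x * u)) * (ENNReal.ofReal x)⁻¹)
      ≤ ENNReal.ofReal θ * ENNReal.ofReal u := by
  have := hlp_piece_const (a := 0) (b := θ) hu le_rfl
  rw [sub_zero] at this
  exact this.trans (le_of_eq (mul_comm _ _))

lemma hlp_g_big {θ u : ℝ} (hθ : 0 < θ) (hu : 1 ≤ u) :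
    (∫⁻ x in Ioc (0:ℝ) θ, ENNReal.ofReal (1 - Real.exp (-x * u)) * (ENNReal.ofReal x)⁻¹)
      ≤ 1 + ENNReal.ofReal (max 0 (Real.log θ)) + ENNReal.ofReal (Real.log u) := by
  have hu0 : 0 < u := lt_of_lt_of_le one_pos hu
  have hm0 : 0 < min θ u⁻¹ := lt_min hθ (by positivity)
  have hmθ : min θ u⁻¹ ≤ θ := min_le_left _ _
  have hsplit : Ioc (0:ℝ) θ = Ioc 0 (min θ u⁻¹) ∪ Ioc (min θ u⁻¹) θ :=
    (Ioc_union_Ioc_eq_Ioc hm0.le hmθ).symm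
  rw [hsplit]
  refine le_trans (lintegral_union_le _ _ _) ?_
  have h1 : (∫⁻ x in Ioc (0:ℝ) (min θ u⁻¹),
      ENNReal.ofReal (1 - Real.exp (-x * u)) * (ENNReal.ofReal x)⁻¹) ≤ 1 := by
    refine le_trans (hlp_piece_const hu0 le_rfl) ?_
    rw [sub_zero, ← ENNReal.ofReal_mul hu0.le]
    refine le_trans (ENNReal.ofReal_le_ofReal (show u * min θ u⁻¹ ≤ 1 from ?_)) (by simp)
    calc u * min θ u⁻¹ ≤ u * u⁻¹ :=
          mul_le_mul_of_nonneg_left (min_le_right _ _) hu0.le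
      _ = 1 := mul_inv_cancel₀ hu0.ne'
  have h2 : (∫⁻ x in Ioc (min θ u⁻¹) θ,
      ENNReal.ofReal (1 - Real.exp (-x * u)) * (ENNReal.ofReal x)⁻¹)
      ≤ ENNReal.ofReal (max 0 (Real.log θ)) + ENNReal.ofReal (Real.log u) := by
    have hlog : Real.log θ - Real.log (min θ u⁻¹) ≤ max 0 (Real.log θ) + Real.log u := by
      have hlu : 0 ≤ Real.log u := Real.log_nonneg hu
      rcases le_total θ u⁻¹ with h | h
      · rw [min_eq_left h]
        linarith [le_max_left (0:ℝ) (Real.log θ)]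
      · rw [min_eq_right h, Real.log_inv]
        linarith [le_max_right (0:ℝ) (Real.log θ)]
    calc (∫⁻ x in Ioc (min θ u⁻¹) θ,
        ENNReal.ofReal (1 - Real.exp (-x * u)) * (ENNReal.ofReal x)⁻¹)
        ≤ ∫⁻ x in Ioc (min θ u⁻¹) θ, (ENNReal.ofReal x)⁻¹ :=
          setLIntegral_mono' measurableSet_Ioc fun x _ => hlp_k_le_inv
      _ = ENNReal.ofReal (Real.log θ - Real.log (min θ u⁻¹)) := hlp_lint_inv _ θ hm0 hmθ
      _ ≤ ENNReal.ofReal (max 0 (Real.log θ) + Real.log u) := ENNReal.ofReal_le_ofReal hlog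
      _ = _ := ENNReal.ofReal_add (le_max_left _ _) (Real.log_nonneg hu)
  calc _ ≤ 1 + (ENNReal.ofReal (max 0 (Real.log θ)) + ENNReal.ofReal (Real.log u)) :=
        add_le_add h1 h2
    _ = _ := (add_assoc _ _ _).symm

lemma hlp_g_lower {θ u : ℝ} (hθ : 0 < θ) (hu : 2*(1+θ⁻¹)^2 ≤ u) :
    ENNReal.ofReal ((1 - Real.exp (-1))/2) * ENNReal.ofReal (Real.log u)
      ≤ ∫⁻ x in Ioc (0:ℝ) θ, ENNReal.ofReal (1 - Real.exp (-x * u)) * (ENNReal.ofReal x)⁻¹ := by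
  have hθi : 0 < θ⁻¹ := by positivity
  have hu2 : 2 ≤ u := le_trans (by nlinarith) hu
  have hu0 : 0 < u := by linarith
  have hiu : u⁻¹ < θ := by
    have h1 : θ⁻¹ < u := by nlinarith
    have := inv_strictAnti₀ hθi h1
    rwa [inv_inv] at this
  have hsub : Ioc u⁻¹ θ ⊆ Ioc (0:ℝ) θ := Ioc_subset_Ioc (by positivity) le_rfl
  refine le_trans ?_ (lintegral_mono_set hsub)
  have he : 0 ≤ 1 - Real.exp (-1) := by linarith [hlp_exp1_lt]
  calc ENNReal.ofReal ((1 - Real.exp (-1))/2) * ENNReal.ofReal (Real.log u)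
      ≤ ENNReal.ofReal (1 - Real.exp (-1)) * ENNReal.ofReal (Real.log θ - Real.log u⁻¹) := by
        rw [← ENNReal.ofReal_mul (by positivity), ← ENNReal.ofReal_mul he]
        refine ENNReal.ofReal_le_ofReal ?_
        rw [Real.log_inv]
        have hlogu : 2 * Real.log θ⁻¹ ≤ Real.log u := by
          have hsq : (θ⁻¹)^2 ≤ u := by nlinarith
          calc 2 * Real.log θ⁻¹ = Real.log ((θ⁻¹)^2) := by
                rw [Real.log_pow]; push_cast; ring
            _ ≤ Real.log u := Real.log_le_log (by positivity) hsq
        have hli : Real.log θ⁻¹ = - Real.log θ := Real.log_inv θ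
        have hlu : 0 ≤ Real.log u := Real.log_nonneg (by linarith)
        nlinarith
    _ = ∫⁻ x in Ioc u⁻¹ θ, ENNReal.ofReal (1 - Real.exp (-1)) * (ENNReal.ofReal x)⁻¹ := by
        rw [lintegral_const_mul' _ _ ENNReal.ofReal_ne_top,
          hlp_lint_inv u⁻¹ θ (by positivity) hiu.le]
    _ ≤ ∫⁻ x in Ioc u⁻¹ θ, ENNReal.ofReal (1 - Real.exp (-x * u)) * (ENNReal.ofReal x)⁻¹ := by
        refine setLIntegral_mono' measurableSet_Ioc fun x hx => ?_
        refine mul_le_mul_left (ENNReal.ofReal_le_ofReal ?_) _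
        have h1 : (1:ℝ) ≤ x * u := by
          have hxu : u⁻¹ < x := hx.1
          calc (1:ℝ) = u⁻¹ * u := (inv_mul_cancel₀ hu0.ne').symm
            _ ≤ x * u := by nlinarith
        have h2 : Real.exp (-(x*u)) ≤ Real.exp (-1) := Real.exp_le_exp.2 (by linarith)
        rw [neg_mul]
        linarith

lemma hlp_tail_fin (ν : Measure ℝ) (hνint : ∫⁻ u, ENNReal.ofReal (min 1 u) ∂ν < ⊤)
    {ε : ℝ} (hε : 0 < ε) : ν (Ioi ε) < ⊤ := by
  have hc : (0:ENNReal) < ENNReal.ofReal (min 1 ε) := by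
    rw [ENNReal.ofReal_pos]; exact lt_min one_pos hε
  have h1 : ENNReal.ofReal (min 1 ε) * ν (Ioi ε) ≤ ∫⁻ u, ENNReal.ofReal (min 1 u) ∂ν := by
    rw [← setLIntegral_const (Ioi ε) (ENNReal.ofReal (min 1 ε))]
    refine le_trans (setLIntegral_mono' measurableSet_Ioi fun u hu => ?_) (setLIntegral_le_lintegral _ _)
    exact ENNReal.ofReal_le_ofReal (min_le_min le_rfl (le_of_lt hu))
  by_contra h
  rw [not_lt, top_le_iff] at h
  rw [h, ENNReal.mul_top hc.ne'] at h1
  exact absurd (top_le_iff.1 h1) hνint.ne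


lemma hlp_sigmaFinite (ν : Measure ℝ) (hν0 : ν (Iic 0) = 0)
    (hνint : ∫⁻ u, ENNReal.ofReal (min 1 u) ∂ν < ⊤) : SigmaFinite ν := by
  refine ⟨⟨⟨fun n => Iic 0 ∪ Ioi (1/((n:ℝ)+1)), fun _ => trivial, fun n => ?_, ?_⟩⟩⟩
  · refine lt_of_le_of_lt (measure_union_le _ _) ?_
    rw [hν0, zero_add]
    exact hlp_tail_fin ν hνint (by positivity)
  · ext x
    simp only [mem_iUnion, mem_union, mem_Iic, mem_Ioi, mem_univ, iff_true]
    rcases le_or_gt x 0 with hx | hx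
    · exact ⟨0, Or.inl hx⟩
    · obtain ⟨n, hn⟩ := exists_nat_one_div_lt hx
      exact ⟨n, Or.inr hn⟩

-- step 1+2+3: I θ = ⊤ ↔ ∫ g ν = ⊤
lemma hlp_reduce (ν : Measure ℝ) [SigmaFinite ν] (β : ℝ) (hβ : 0 ≤ β) (hν0 : ν (Iic 0) = 0)
    (hνint : ∫⁻ u, ENNReal.ofReal (min 1 u) ∂ν < ⊤)
    (Φ : ℝ → ℝ)
    (hΦ : ∀ q, 0 ≤ q → Φ q = β * q + ∫ u, (1 - Real.exp (-q * u)) ∂ν)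
    (θ : ℝ) (hθ : 0 < θ) :
    ((∫⁻ x in Ioc (0:ℝ) θ, ENNReal.ofReal (Φ x / x)) = ⊤ ↔
      (∫⁻ u, (∫⁻ x in Ioc (0:ℝ) θ,
        ENNReal.ofReal (1 - Real.exp (-x * u)) * (ENNReal.ofReal x)⁻¹) ∂ν) = ⊤) := by
  have hae_pos : ∀ᵐ u ∂ν, 0 < u := by
    rw [ae_iff]
    convert hν0 using 2
    ext u; simp [not_lt]
  set F : ℝ → ENNReal := fun x => ∫⁻ u, ENNReal.ofReal (1 - Real.exp (-x * u)) ∂ν with hF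
  have hF_lt : ∀ x : ℝ, 0 < x → F x < ⊤ := by
    intro x hx
    have hb : F x ≤ ENNReal.ofReal (max 1 x) * ∫⁻ u, ENNReal.ofReal (min 1 u) ∂ν := by
      rw [← lintegral_const_mul' _ _ ENNReal.ofReal_ne_top]
      refine lintegral_mono_ae ?_
      filter_upwards [hae_pos] with u hu
      rw [← ENNReal.ofReal_mul (le_trans zero_le_one (le_max_left 1 x))]
      refine ENNReal.ofReal_le_ofReal ?_
      have h1 : 1 - Real.exp (-(x*u)) ≤ min 1 (x*u) :=
        hlp_one_sub_exp_le_min (by positivity)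
      have h2 : min 1 (x*u) ≤ max 1 x * min 1 u := by
        rcases le_total u 1 with h | h
        · calc min 1 (x*u) ≤ x*u := min_le_right _ _
            _ ≤ max 1 x * u := by nlinarith [le_max_right 1 x]
            _ = max 1 x * min 1 u := by rw [min_eq_right h]
        · calc min 1 (x*u) ≤ 1 := min_le_left _ _
            _ ≤ max 1 x * 1 := by nlinarith [le_max_left 1 x]
            _ = max 1 x * min 1 u := by rw [min_eq_left h]
      calc 1 - Real.exp (-x*u) = 1 - Real.exp (-(x*u)) := by ring_nf
        _ ≤ max 1 x * min 1 u := le_trans h1 h2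
    exact lt_of_le_of_lt hb (ENNReal.mul_lt_top ENNReal.ofReal_lt_top hνint)
  have hΦF : ∀ x : ℝ, 0 < x →
      ENNReal.ofReal (Φ x / x) = ENNReal.ofReal β + F x / ENNReal.ofReal x := by
    intro x hx
    have hint : (∫ u, (1 - Real.exp (-x * u)) ∂ν) = (F x).toReal := by
      refine integral_eq_lintegral_of_nonneg_ae ?_ (Continuous.aestronglyMeasurable (by continuity))
      filter_upwards [hae_pos] with u hu
      have : Real.exp (-x*u) ≤ 1 := Real.exp_le_one_iff.2 (by nlinarith)
      simp only [Pi.zero_apply]; linarith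
    have hΦx : Φ x = β * x + (F x).toReal := by rw [hΦ x hx.le, hint]
    have hFt : (0:ℝ) ≤ (F x).toReal := ENNReal.toReal_nonneg
    rw [hΦx, add_div, mul_div_assoc, div_self hx.ne', mul_one,
      ENNReal.ofReal_add hβ (by positivity), ENNReal.ofReal_div_of_pos hx,
      ENNReal.ofReal_toReal (hF_lt x hx).ne]
  have hcongr : (∫⁻ x in Ioc (0:ℝ) θ, ENNReal.ofReal (Φ x / x))
      = ∫⁻ x in Ioc (0:ℝ) θ, (ENNReal.ofReal β + F x / ENNReal.ofReal x) :=
    setLIntegral_congr_fun measurableSet_Ioc (fun x hx => hΦF x hx.1)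
  rw [hcongr, lintegral_add_left measurable_const, setLIntegral_const]
  have hfin : ENNReal.ofReal β * volume (Ioc 0 θ) ≠ ⊤ :=
    ENNReal.mul_ne_top ENNReal.ofReal_ne_top measure_Ioc_lt_top.ne
  rw [ENNReal.add_eq_top, or_iff_right hfin]
  -- now swap
  have hswap : (∫⁻ x in Ioc (0:ℝ) θ, F x / ENNReal.ofReal x)
      = ∫⁻ u, (∫⁻ x in Ioc (0:ℝ) θ,
          ENNReal.ofReal (1 - Real.exp (-x * u)) * (ENNReal.ofReal x)⁻¹) ∂ν := by
    have h1 : (∫⁻ x in Ioc (0:ℝ) θ, F x / ENNReal.ofReal x)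
        = ∫⁻ x in Ioc (0:ℝ) θ, ∫⁻ u,
            ENNReal.ofReal (1 - Real.exp (-x * u)) * (ENNReal.ofReal x)⁻¹ ∂ν := by
      refine setLIntegral_congr_fun measurableSet_Ioc (fun x hx => ?_)
      rw [div_eq_mul_inv, ← lintegral_mul_const' _ _ (by
        simp [ENNReal.inv_ne_top, ENNReal.ofReal_pos.2 hx.1, (ENNReal.ofReal_pos.2 hx.1).ne'])]
    rw [h1]
    have hmeas : AEMeasurable (Function.uncurry fun x u =>
        ENNReal.ofReal (1 - Real.exp (-x * u)) * (ENNReal.ofReal x)⁻¹)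
        ((volume.restrict (Ioc (0:ℝ) θ)).prod ν) := by
      refine Measurable.aemeasurable ?_
      have : (Function.uncurry fun x u =>
          ENNReal.ofReal (1 - Real.exp (-x * u)) * (ENNReal.ofReal x)⁻¹)
          = fun p : ℝ × ℝ => ENNReal.ofReal (1 - Real.exp (-p.1 * p.2)) * (ENNReal.ofReal p.1)⁻¹ := rfl
      rw [this]; fun_prop
    exact lintegral_lintegral_swap hmeas
  rw [hswap]

lemma hlp_main (ν : Measure ℝ) (β : ℝ) (hβ : 0 ≤ β) (hν0 : ν (Iic 0) = 0)
    (hνint : ∫⁻ u, ENNReal.ofReal (min 1 u) ∂ν < ⊤)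
    (Φ : ℝ → ℝ)
    (hΦ : ∀ q, 0 ≤ q → Φ q = β * q + ∫ u, (1 - Real.exp (-q * u)) ∂ν)
    (θ : ℝ) (hθ : 0 < θ) :
    (∫⁻ x in Ioc (0:ℝ) θ, ENNReal.ofReal (Φ x / x)) = ⊤ ↔
      (∫⁻ h in Ioi (1:ℝ), ENNReal.ofReal (Real.log h) ∂ν = ⊤) := by
  haveI : SigmaFinite ν := hlp_sigmaFinite ν hν0 hνint
  rw [hlp_reduce ν β hβ hν0 hνint Φ hΦ θ hθ]
  have hae_pos : ∀ᵐ u ∂ν, 0 < u := by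
    rw [ae_iff]
    convert hν0 using 2
    ext u; simp [not_lt]
  set g : ℝ → ENNReal := fun u => ∫⁻ x in Ioc (0:ℝ) θ,
    ENNReal.ofReal (1 - Real.exp (-x * u)) * (ENNReal.ofReal x)⁻¹ with hg
  set C : ENNReal := 1 + ENNReal.ofReal (max 0 (Real.log θ)) with hC
  have hCfin : C ≠ ⊤ := by
    rw [hC]; exact ENNReal.add_ne_top.2 ⟨ENNReal.one_ne_top, ENNReal.ofReal_ne_top⟩
  have hν1 : ν (Ioi 1) < ⊤ := hlp_tail_fin ν hνint one_pos
  constructor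
  · -- J = ⊤ → L = ⊤
    intro hJ
    by_contra hL
    have hbound : ∀ᵐ u ∂ν, g u ≤ ENNReal.ofReal θ * ENNReal.ofReal (min 1 u)
        + (Ioi (1:ℝ)).indicator (fun u => C + ENNReal.ofReal (Real.log u)) u := by
      filter_upwards [hae_pos] with u hu
      rcases le_or_gt u 1 with h | h
      · refine le_add_right ?_
        rw [min_eq_right h]
        exact hlp_g_small hθ hu
      · refine le_add_left ?_
        rw [indicator_of_mem (mem_Ioi.2 h)]
        exact hlp_g_big hθ h.le
    have hfin : (∫⁻ u, (ENNReal.ofReal θ * ENNReal.ofReal (min 1 u)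
        + (Ioi (1:ℝ)).indicator (fun u => C + ENNReal.ofReal (Real.log u)) u) ∂ν) < ⊤ := by
      rw [lintegral_add_left (by fun_prop)]
      refine ENNReal.add_lt_top.2 ⟨?_, ?_⟩
      · rw [lintegral_const_mul' _ _ ENNReal.ofReal_ne_top]
        exact ENNReal.mul_lt_top ENNReal.ofReal_lt_top hνint
      · rw [lintegral_indicator measurableSet_Ioi, lintegral_add_left measurable_const,
          setLIntegral_const]
        exact ENNReal.add_lt_top.2 ⟨ENNReal.mul_lt_top hCfin.lt_top hν1,
          lt_top_iff_ne_top.2 hL⟩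
    exact absurd hJ (lt_top_iff_ne_top.1 (lt_of_le_of_lt (lintegral_mono_ae hbound) hfin)).elim
  · -- L = ⊤ → J = ⊤
    intro hL
    set M : ℝ := 2*(1+θ⁻¹)^2 with hM
    have hM1 : (1:ℝ) ≤ M := by
      have : 0 < θ⁻¹ := by positivity
      nlinarith
    have hsplit : (∫⁻ u in Ioc (1:ℝ) M, ENNReal.ofReal (Real.log u) ∂ν)
        + (∫⁻ u in Ioi M, ENNReal.ofReal (Real.log u) ∂ν) = ⊤ := by
      rw [← lintegral_union measurableSet_Ioi (Ioc_disjoint_Ioi le_rfl),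
        Ioc_union_Ioi_eq_Ioi hM1]
      exact hL
    have hfin1 : (∫⁻ u in Ioc (1:ℝ) M, ENNReal.ofReal (Real.log u) ∂ν) < ⊤ := by
      calc (∫⁻ u in Ioc (1:ℝ) M, ENNReal.ofReal (Real.log u) ∂ν)
          ≤ ∫⁻ _ in Ioc (1:ℝ) M, ENNReal.ofReal (Real.log M) ∂ν := by
            refine setLIntegral_mono' measurableSet_Ioc fun u hu => ?_
            exact ENNReal.ofReal_le_ofReal (Real.log_le_log (lt_trans one_pos hu.1) hu.2)
        _ = ENNReal.ofReal (Real.log M) * ν (Ioc 1 M) := setLIntegral_const _ _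
        _ ≤ ENNReal.ofReal (Real.log M) * ν (Ioi 1) :=
            mul_le_mul_right (measure_mono Ioc_subset_Ioi_self) _
        _ < ⊤ := ENNReal.mul_lt_top ENNReal.ofReal_lt_top hν1
    have htail : (∫⁻ u in Ioi M, ENNReal.ofReal (Real.log u) ∂ν) = ⊤ := by
      by_contra h
      exact absurd hsplit (by
        simp [ENNReal.add_eq_top, hfin1.ne, h])
    have hgeq : (∫⁻ u in Ioi M, g u ∂ν) = ⊤ := by
      rw [eq_top_iff]
      calc (⊤:ENNReal) = ENNReal.ofReal ((1 - Real.exp (-1))/2)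
            * ∫⁻ u in Ioi M, ENNReal.ofReal (Real.log u) ∂ν := by
            rw [htail, ENNReal.mul_top]
            rw [Ne, ENNReal.ofReal_eq_zero, not_le]
            have := hlp_exp1_lt
            linarith
        _ = ∫⁻ u in Ioi M, ENNReal.ofReal ((1 - Real.exp (-1))/2)
            * ENNReal.ofReal (Real.log u) ∂ν :=
            (lintegral_const_mul' _ _ ENNReal.ofReal_ne_top).symm
        _ ≤ ∫⁻ u in Ioi M, g u ∂ν := by
            refine setLIntegral_mono' measurableSet_Ioi fun u hu => ?_
            exact hlp_g_lower hθ (le_of_lt hu)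
    rw [eq_top_iff, ← hgeq]
    exact setLIntegral_le_lintegral _ _


/-- the log-moment of ν is infinite iff `∫₀^θ Φ(x)/x dx = ∞`
for some θ > 0 (equivalently, for every θ > 0). -/
theorem stmt_11
    (ν : Measure ℝ) (β : ℝ) (hβ : 0 ≤ β)
    (hν0 : ν (Iic 0) = 0)
    (hνint : ∫⁻ u, ENNReal.ofReal (min 1 u) ∂ν < ⊤)
    (Φ : ℝ → ℝ)
    (hΦ : ∀ q, 0 ≤ q → Φ q = β * q + ∫ u, (1 - Real.exp (-q * u)) ∂ν) :
    ((∫⁻ h in Ioi (1:ℝ), ENNReal.ofReal (Real.log h) ∂ν = ⊤) ↔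
      ∃ θ > (0:ℝ), ∫⁻ x in Ioc (0:ℝ) θ, ENNReal.ofReal (Φ x / x) = ⊤) ∧
    ((∫⁻ h in Ioi (1:ℝ), ENNReal.ofReal (Real.log h) ∂ν = ⊤) ↔
      ∀ θ > (0:ℝ), ∫⁻ x in Ioc (0:ℝ) θ, ENNReal.ofReal (Φ x / x) = ⊤) := by

  have key := hlp_main ν β hβ hν0 hνint Φ hΦ
  constructor
  · constructor
    · intro hL
      exact ⟨1, one_pos, (key 1 one_pos).2 hL⟩
    · rintro ⟨θ, hθ, h⟩
      exact (key θ hθ).1 h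
  · constructor
    · intro hL θ hθ
      exact (key θ hθ).2 hL
    · intro h
      exact (key 1 one_pos).1 (h 1 one_pos)
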